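/- For an open Markov process with boundary B, and positive distributions p(t), q(t) obeying the open master equation, the rate of change of relative entropy is bounded by the boundary terms: d/dt I(p(t), q(t)) ≤ ∑_{i∈B} (Dp_i/Dt)·(∂I/∂p_i) + (Dq_i/Dt)·(∂I/∂q_i), where Dp_i/Dt := dp_i/dt − ∑_j H_{ij} p_j. -/

import Mathlib

/-- For an open Markov process with boundary `B` and positive distributions
`p(t), q(t)` obeying the open master equation, the rate of change of relative
entropy is bounded by the flow of relative entropy through the boundary. -/
theorem relative_entropy_boundary_bound {V : Type*} [Fintype V]
    (H : V → V → ℝ)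
    (hoff : ∀ i j, i ≠ j → 0 ≤ H i j)
    (hsum : ∀ j, ∑ i, H i j = 0)
    (B : Finset V)
    (p q : ℝ → V → ℝ)
    (hp : ∀ t i, 0 < p t i) (hq : ∀ t i, 0 < q t i)
    (p' q' : V → ℝ) (t : ℝ)
    (hpd : ∀ i, HasDerivAt (fun s => p s i) (p' i) t)
    (hqd : ∀ i, HasDerivAt (fun s => q s i) (q' i) t)
    (hpint : ∀ i ∉ B, p' i = ∑ j, H i j * p t j)
    (hqint : ∀ i ∉ B, q' i = ∑ j, H i j * q t j) :
    deriv (fun s => ∑ i, p s i * Real.log (p s i / q s i)) t ≤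
      ∑ i ∈ B, ((p' i - ∑ j, H i j * p t j) * (Real.log (p t i / q t i) + 1) +
        (q' i - ∑ j, H i j * q t j) * (-(p t i / q t i))) := by
  have hpne : ∀ i, p t i ≠ 0 := fun i => (hp t i).ne'
  have hqne : ∀ i, q t i ≠ 0 := fun i => (hq t i).ne'
  -- Step 1: compute the derivative
  have hderiv : HasDerivAt (fun s => ∑ i, p s i * Real.log (p s i / q s i))
      (∑ i, (p' i * (Real.log (p t i / q t i) + 1) + q' i * (-(p t i / q t i)))) t := by
    apply HasDerivAt.fun_sum
    intro i _
    have h1 : HasDerivAt (fun s => p s i / q s i)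
        ((p' i * q t i - p t i * q' i) / (q t i)^2) t := (hpd i).div (hqd i) (hqne i)
    have h2 : HasDerivAt (fun s => Real.log (p s i / q s i))
        (((p' i * q t i - p t i * q' i) / (q t i)^2) / (p t i / q t i)) t :=
      h1.log (div_ne_zero (hpne i) (hqne i))
    have h3 := (hpd i).fun_mul h2
    convert h3 using 1
    · rfl
    field_simp [hpne i, hqne i]
    ring
  rw [hderiv.deriv]
  -- Step 2: extend the boundary sum to all of V
  have hBsum : ∑ i ∈ B, ((p' i - ∑ j, H i j * p t j) * (Real.log (p t i / q t i) + 1) +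
        (q' i - ∑ j, H i j * q t j) * (-(p t i / q t i)))
      = ∑ i, ((p' i - ∑ j, H i j * p t j) * (Real.log (p t i / q t i) + 1) +
        (q' i - ∑ j, H i j * q t j) * (-(p t i / q t i))) := by
    apply Finset.sum_subset B.subset_univ
    intro i _ hi
    rw [hpint i hi, hqint i hi]
    ring
  rw [hBsum]
  -- Step 3: split each summand
  have hsplit : ∀ i ∈ Finset.univ (α := V),
      p' i * (Real.log (p t i / q t i) + 1) + q' i * (-(p t i / q t i)) =
      ((p' i - ∑ j, H i j * p t j) * (Real.log (p t i / q t i) + 1) +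
        (q' i - ∑ j, H i j * q t j) * (-(p t i / q t i)))
      + ((∑ j, H i j * p t j) * (Real.log (p t i / q t i) + 1)
          - (∑ j, H i j * q t j) * (p t i / q t i)) := by
    intro i _
    ring
  rw [Finset.sum_congr rfl hsplit, Finset.sum_add_distrib]
  have key : ∑ i, ((∑ j, H i j * p t j) * (Real.log (p t i / q t i) + 1)
      - (∑ j, H i j * q t j) * (p t i / q t i)) ≤ 0 := by
    have expand : ∀ i ∈ Finset.univ (α := V),
        (∑ j, H i j * p t j) * (Real.log (p t i / q t i) + 1)
          - (∑ j, H i j * q t j) * (p t i / q t i)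
        = ∑ j, H i j * (p t j * (Real.log (p t i / q t i) + 1)
            - q t j * (p t i / q t i)) := by
      intro i _
      rw [Finset.sum_mul, Finset.sum_mul, ← Finset.sum_sub_distrib]
      exact Finset.sum_congr rfl fun j _ => by ring
    rw [Finset.sum_congr rfl expand, Finset.sum_comm]
    apply Finset.sum_nonpos
    intro j _
    -- rewrite the column sum using the column-sum-zero property
    have colrw : ∑ i, H i j * (p t j * (Real.log (p t i / q t i) + 1)
          - q t j * (p t i / q t i))
        = ∑ i, H i j * (p t j * (Real.log (p t i / q t i) - Real.log (p t j / q t j))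
            + q t j * (p t j / q t j - p t i / q t i)) := by
      have step : ∀ i ∈ Finset.univ (α := V),
          H i j * (p t j * (Real.log (p t i / q t i) + 1) - q t j * (p t i / q t i))
          = H i j * (p t j * (Real.log (p t i / q t i) - Real.log (p t j / q t j))
              + q t j * (p t j / q t j - p t i / q t i))
            + H i j * (p t j * (Real.log (p t j / q t j) + 1)
                - q t j * (p t j / q t j)) := by
        intro i _
        ring
      rw [Finset.sum_congr rfl step, Finset.sum_add_distrib, ← Finset.sum_mul,
          hsum j, zero_mul, add_zero]
    rw [colrw]
    apply Finset.sum_nonpos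
    intro i _
    rcases eq_or_ne i j with h | h
    · subst h
      simp
    · have hH := hoff i j h
      have hri : (0:ℝ) < p t i / q t i := div_pos (hp t i) (hq t i)
      have hrj : (0:ℝ) < p t j / q t j := div_pos (hp t j) (hq t j)
      have hgle : p t j * (Real.log (p t i / q t i) - Real.log (p t j / q t j))
          + q t j * (p t j / q t j - p t i / q t i) ≤ 0 := by
        have hlog : Real.log (p t i / q t i) - Real.log (p t j / q t j)
            ≤ (p t i / q t i) / (p t j / q t j) - 1 := by
          have h0 := Real.log_le_sub_one_of_pos (div_pos hri hrj)
          rwa [Real.log_div hri.ne' hrj.ne'] at h0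
        have hpj : p t j = q t j * (p t j / q t j) := by
          rw [mul_div_assoc']
          exact (mul_div_cancel_left₀ (p t j) (hqne j)).symm
        have hstep : p t j * (Real.log (p t i / q t i) - Real.log (p t j / q t j))
            ≤ p t j * ((p t i / q t i) / (p t j / q t j) - 1) := by
          have := hp t j
          nlinarith
        have heq : p t j * ((p t i / q t i) / (p t j / q t j) - 1)
            + q t j * (p t j / q t j - p t i / q t i) = 0 := by
          field_simp [hpne j, hqne j, hpne i, hqne i]
          ring
        linarith
      exact mul_nonpos_of_nonneg_of_nonpos hH hgle
  linarith
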